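/- Assume (H1) and let l ∈ (0,h] satisfy M · l^{α+k+1-γ} · Γ(k+1)/Γ(α+k+1) ≤ b. Then for all t ∈ (1,1+l]: (log t)^{1-γ} |φ₁(t) - φ₀(t)| ≤ M (log t)^{α+k+1-γ} Γ(k+1)/Γ(α+k+1). -/

import Mathlib

open Real MeasureTheory intervalIntegral Set Filter

/-- Picard iterates for the Hilfer-Hadamard initial value problem. -/
noncomputable def picard (α γ x₀ : ℝ) (f : ℝ → ℝ → ℝ) : ℕ → ℝ → ℝ
  | 0 => fun t => x₀ * Real.log t ^ (γ - 1)
  | n + 1 => fun t => x₀ * Real.log t ^ (γ - 1) +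
      (1 / Real.Gamma α) *
        ∫ s in (1:ℝ)..t, Real.log (t / s) ^ (α - 1) * f s (picard α γ x₀ f n s) / s


lemma realBeta_integrable {a b : ℝ} (ha : 0 < a) (hb : 0 < b) :
    IntervalIntegrable (fun x : ℝ => x ^ (a - 1) * (1 - x) ^ (b - 1)) volume 0 1 := by
  have hc := Complex.betaIntegral_convergent (u := a) (v := b) (by simpa) (by simpa)
  rw [intervalIntegrable_iff_integrableOn_Ioc_of_le zero_le_one] at hc ⊢
  refine hc.re.congr ?_
  filter_upwards [ae_restrict_mem measurableSet_Ioc] with x hx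
  have h1 : (0:ℝ) ≤ x := hx.1.le
  have h2 : (0:ℝ) ≤ 1 - x := by linarith [hx.2]
  have e1 : ((x:ℂ)) ^ ((a:ℂ) - 1) = ((x ^ (a-1) : ℝ) : ℂ) := by
    rw [Complex.ofReal_cpow h1]; push_cast; ring_nf
  have e2 : ((1:ℂ) - (x:ℂ)) ^ ((b:ℂ) - 1) = (((1 - x) ^ (b-1) : ℝ) : ℂ) := by
    rw [Complex.ofReal_cpow h2]; push_cast; ring_nf
  simp [e1, e2, ← Complex.ofReal_mul]

lemma realBeta_eq {a b : ℝ} (ha : 0 < a) (hb : 0 < b) :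
    ∫ x in (0:ℝ)..1, x ^ (a - 1) * (1 - x) ^ (b - 1)
      = Real.Gamma a * Real.Gamma b / Real.Gamma (a + b) := by
  have h := Complex.Gamma_mul_Gamma_eq_betaIntegral (s := a) (t := b) (by simpa) (by simpa)
  have key : Complex.betaIntegral a b
      = ((∫ x in (0:ℝ)..1, x ^ (a - 1) * (1 - x) ^ (b - 1) : ℝ) : ℂ) := by
    rw [Complex.betaIntegral, ← intervalIntegral.integral_ofReal]
    apply intervalIntegral.integral_congr
    intro x hx
    rw [Set.uIcc_of_le zero_le_one] at hx
    have h1 : (0:ℝ) ≤ x := hx.1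
    have h2 : (0:ℝ) ≤ 1 - x := by linarith [hx.2]
    have e1 : ((x:ℂ)) ^ ((a:ℂ) - 1) = ((x ^ (a-1) : ℝ) : ℂ) := by
      rw [Complex.ofReal_cpow h1]; push_cast; ring_nf
    have e2 : ((1:ℂ) - (x:ℂ)) ^ ((b:ℂ) - 1) = (((1 - x) ^ (b-1) : ℝ) : ℂ) := by
      rw [Complex.ofReal_cpow h2]; push_cast; ring_nf
    simp [e1, e2, ← Complex.ofReal_mul]
  rw [key, ← Complex.ofReal_add] at h
  rw [Complex.Gamma_ofReal, Complex.Gamma_ofReal, Complex.Gamma_ofReal] at h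
  rw [← Complex.ofReal_mul, ← Complex.ofReal_mul] at h
  have h' := Complex.ofReal_injective h
  have hΓ : Real.Gamma (a + b) ≠ 0 := (Real.Gamma_pos_of_pos (by linarith)).ne'
  field_simp at h' ⊢
  linarith [h']

lemma scaledBeta_eq {a b T : ℝ} (ha : 0 < a) (hb : 0 < b) (hT : 0 < T) :
    ∫ x in (0:ℝ)..T, x ^ (a - 1) * (T - x) ^ (b - 1)
      = T ^ (a + b - 1) * (Real.Gamma a * Real.Gamma b / Real.Gamma (a + b)) := by
  have h0 : (T • ∫ x in (0:ℝ)..1, (T * x) ^ (a-1) * (T - T * x) ^ (b-1))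
      = ∫ x in (T * 0)..(T * 1), x ^ (a-1) * (T-x) ^ (b-1) :=
    intervalIntegral.smul_integral_comp_mul_left (fun u => u ^ (a-1) * (T-u) ^ (b-1)) T
  rw [mul_zero, mul_one] at h0
  rw [← h0]
  have h1 : ∫ x in (0:ℝ)..1, (T * x) ^ (a-1) * (T - T * x) ^ (b-1)
      = ∫ x in (0:ℝ)..1, T ^ (a-1) * T ^ (b-1) * (x ^ (a-1) * (1-x) ^ (b-1)) := by
    apply intervalIntegral.integral_congr
    intro x hx
    rw [Set.uIcc_of_le zero_le_one] at hx
    have h1x : (0:ℝ) ≤ 1 - x := by linarith [hx.2]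
    simp only
    rw [show T - T * x = T * (1 - x) by ring, Real.mul_rpow hT.le hx.1,
      Real.mul_rpow hT.le h1x]
    ring
  rw [h1, intervalIntegral.integral_const_mul, realBeta_eq ha hb, smul_eq_mul]
  rw [← Real.rpow_add hT]
  nth_rewrite 1 [show (T : ℝ) = T ^ (1:ℝ) from (Real.rpow_one T).symm]
  rw [← mul_assoc, ← Real.rpow_add hT, show (1:ℝ) + (a - 1 + (b - 1)) = a + b - 1 by ring]

lemma scaledBeta_integrableOn {a b T : ℝ} (ha : 0 < a) (hb : 0 < b) (hT : 0 < T) :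
    IntegrableOn (fun x : ℝ => x ^ (a - 1) * (T - x) ^ (b - 1)) (Ioc 0 T) := by
  have h := (realBeta_integrable ha hb).comp_mul_left (c := 1/T)
  rw [zero_div, one_div_one_div] at h
  rw [intervalIntegrable_iff_integrableOn_Ioc_of_le hT.le] at h
  have h2 : IntegrableOn
      (fun x : ℝ => T ^ (a-1) * T ^ (b-1) * ((1 / T * x) ^ (a - 1) * (1 - 1 / T * x) ^ (b - 1)))
      (Ioc 0 T) volume := h.const_mul _
  refine h2.congr_fun ?_ measurableSet_Ioc
  intro x hx
  have hx0 : 0 ≤ x := hx.1.le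
  have hxT : 0 ≤ T - x := by linarith [hx.2]
  simp only
  rw [show (1:ℝ) / T * x = x / T by ring, show (1:ℝ) - x / T = (T - x) / T by field_simp,
    Real.div_rpow hx0 hT.le, Real.div_rpow hxT hT.le]
  field_simp

theorem picard_first_difference_bound (α β γ x₀ h b M k : ℝ) (f : ℝ → ℝ → ℝ)
    (hα0 : 0 < α) (hα1 : α < 1) (hβ0 : 0 ≤ β) (hβ1 : β ≤ 1)
    (hγ : γ = α + β * (1 - α))
    (hh : 0 < h) (hb : 0 < b) (hM : 0 ≤ M) (hk : β * (1 - α) - 1 < k)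
    (H1cont : ∀ t ∈ Set.Ioc (1:ℝ) (1 + h),
      ContinuousOn (fun x : ℝ => f t (Real.log t ^ (γ - 1) * x)) (Set.Icc (x₀ - b) (x₀ + b)))
    (H1meas : ∀ x ∈ Set.Icc (x₀ - b) (x₀ + b),
      AEMeasurable (fun t : ℝ => f t (Real.log t ^ (γ - 1) * x))
        (MeasureTheory.volume.restrict (Set.Ioc (1:ℝ) (1 + h))))
    (H1bdd : ∀ t ∈ Set.Ioc (1:ℝ) (1 + h), ∀ x ∈ Set.Icc (x₀ - b) (x₀ + b),
      |f t (Real.log t ^ (γ - 1) * x)| ≤ M * Real.log t ^ k)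
    (l : ℝ) (hl0 : 0 < l) (hlh : l ≤ h)
    (hlb : M * l ^ (α + k + 1 - γ) * (Real.Gamma (k + 1) / Real.Gamma (α + k + 1)) ≤ b)
    : ∀ t ∈ Set.Ioc (1:ℝ) (1 + l),
      Real.log t ^ (1 - γ) * |picard α γ x₀ f 1 t - picard α γ x₀ f 0 t|
        ≤ M * Real.log t ^ (α + k + 1 - γ) * (Real.Gamma (k + 1) / Real.Gamma (α + k + 1)) := by
  intro t ht
  obtain ⟨ht1, htl⟩ := ht
  have ht0 : (0:ℝ) < t := by linarith
  set L := Real.log t with hLdef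
  have hL0 : 0 < L := Real.log_pos ht1
  have hΓα : 0 < Real.Gamma α := Real.Gamma_pos_of_pos hα0
  have hΓk : 0 < Real.Gamma (k + 1) := Real.Gamma_pos_of_pos (by nlinarith)
  have hΓak : 0 < Real.Gamma (α + k + 1) := Real.Gamma_pos_of_pos (by nlinarith)
  have hk1 : (0:ℝ) < k + 1 := by nlinarith
  set g : ℝ → ℝ := fun s => Real.log (t / s) ^ (α - 1) * (M * Real.log s ^ k) / s with hgdef
  -- image of exp
  have himage : Real.exp '' (Ioc 0 L) = Ioc 1 t := by
    ext y
    constructor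
    · rintro ⟨u, hu, rfl⟩
      exact ⟨by simpa using Real.exp_lt_exp.mpr hu.1,
        (Real.exp_le_exp.mpr hu.2).trans_eq (Real.exp_log ht0)⟩
    · rintro ⟨hy1, hyt⟩
      have hy0 : (0:ℝ) < y := by linarith
      exact ⟨Real.log y, ⟨Real.log_pos hy1, (Real.log_le_log_iff hy0 ht0).mpr hyt⟩,
        Real.exp_log hy0⟩
  have hderiv : ∀ x ∈ Ioc (0:ℝ) L, HasDerivWithinAt Real.exp (Real.exp x) (Ioc 0 L) x :=
    fun x _ => (Real.hasDerivAt_exp x).hasDerivWithinAt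
  have hinj : Set.InjOn Real.exp (Ioc 0 L) := Real.exp_injective.injOn
  have hbeta_int : IntegrableOn (fun u : ℝ => u ^ k * (L - u) ^ (α - 1)) (Ioc 0 L) := by
    have := scaledBeta_integrableOn (a := k + 1) (b := α) hk1 hα0 hL0
    simpa using this
  have hcongr : ∀ u ∈ Ioc (0:ℝ) L, |Real.exp u| • g (Real.exp u)
      = M * (u ^ k * (L - u) ^ (α - 1)) := by
    intro u hu
    have he : (0:ℝ) < Real.exp u := Real.exp_pos u
    rw [abs_of_pos he, smul_eq_mul, hgdef]
    simp only
    rw [Real.log_exp, Real.log_div (ne_of_gt ht0) (ne_of_gt he), Real.log_exp]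
    field_simp
    ring
  have hg_int : IntegrableOn g (Ioc 1 t) := by
    rw [← himage,
      integrableOn_image_iff_integrableOn_abs_deriv_smul measurableSet_Ioc hderiv hinj]
    have hM' : IntegrableOn (fun u : ℝ => M * (u ^ k * (L - u) ^ (α - 1))) (Ioc 0 L) volume :=
      hbeta_int.const_mul M
    exact hM'.congr_fun (fun u hu => (hcongr u hu).symm) measurableSet_Ioc
  have hg_val : ∫ s in Ioc (1:ℝ) t, g s
      = M * (L ^ (k + 1 + α - 1) * (Real.Gamma (k + 1) * Real.Gamma α / Real.Gamma (k + 1 + α))) := by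
    rw [← himage, integral_image_eq_integral_abs_deriv_smul measurableSet_Ioc hderiv hinj]
    rw [setIntegral_congr_fun measurableSet_Ioc hcongr]
    rw [MeasureTheory.integral_const_mul]
    congr 1
    rw [← intervalIntegral.integral_of_le hL0.le]
    have := scaledBeta_eq (a := k + 1) (b := α) (T := L) hk1 hα0 hL0
    simpa using this
  have hdiff : picard α γ x₀ f 1 t - picard α γ x₀ f 0 t
      = (1 / Real.Gamma α) *
        ∫ s in (1:ℝ)..t, Real.log (t / s) ^ (α - 1) * f s (picard α γ x₀ f 0 s) / s := by
    simp [picard]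
  have hboundae : ∀ᵐ s ∂(volume.restrict (Set.uIoc 1 t)),
      ‖Real.log (t / s) ^ (α - 1) * f s (picard α γ x₀ f 0 s) / s‖ ≤ g s := by
    rw [Set.uIoc_of_le ht1.le]
    filter_upwards [ae_restrict_mem measurableSet_Ioc] with s hs
    have hs1 : 1 < s := hs.1
    have hs0 : (0:ℝ) < s := by linarith
    have hst : s ≤ t := hs.2
    have hts : (0:ℝ) ≤ Real.log (t / s) :=
      Real.log_nonneg ((one_le_div hs0).mpr hst)
    have hf : |f s (picard α γ x₀ f 0 s)| ≤ M * Real.log s ^ k := by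
      have hx₀ : x₀ ∈ Set.Icc (x₀ - b) (x₀ + b) := ⟨by linarith, by linarith⟩
      have := H1bdd s ⟨hs1, by linarith⟩ x₀ hx₀
      simpa [picard, mul_comm] using this
    rw [hgdef]
    simp only [Real.norm_eq_abs, abs_div, abs_mul, abs_of_pos hs0,
      abs_of_nonneg (Real.rpow_nonneg hts (α - 1))]
    gcongr
  have hInt : IntervalIntegrable g volume 1 t := by
    rw [intervalIntegrable_iff_integrableOn_Ioc_of_le ht1.le]
    exact hg_int
  have hmain := intervalIntegral.norm_integral_le_abs_of_norm_le hboundae hInt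
  have hgval' : ∫ s in (1:ℝ)..t, g s
      = M * (L ^ (k + 1 + α - 1) * (Real.Gamma (k + 1) * Real.Gamma α / Real.Gamma (k + 1 + α))) := by
    rw [intervalIntegral.integral_of_le ht1.le]; exact hg_val
  rw [hgval'] at hmain
  rw [abs_of_nonneg (by positivity)] at hmain
  rw [hdiff, abs_mul, abs_of_pos (by positivity : (0:ℝ) < 1 / Real.Gamma α)]
  have step : L ^ (1 - γ) * (1 / Real.Gamma α *
      ‖∫ s in (1:ℝ)..t, Real.log (t / s) ^ (α - 1) * f s (picard α γ x₀ f 0 s) / s‖)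
      ≤ L ^ (1 - γ) * (1 / Real.Gamma α *
      (M * (L ^ (k + 1 + α - 1) * (Real.Gamma (k + 1) * Real.Gamma α / Real.Gamma (k + 1 + α))))) := by
    gcongr
  rw [Real.norm_eq_abs] at step
  refine le_trans step (le_of_eq ?_)
  rw [show k + 1 + α = α + k + 1 by ring]
  rw [show α + k + 1 - 1 = α + k by ring]
  rw [show M * Real.log t ^ (α + k + 1 - γ) * (Real.Gamma (k + 1) / Real.Gamma (α + k + 1))
    = M * L ^ (α + k + 1 - γ) * (Real.Gamma (k + 1) / Real.Gamma (α + k + 1)) from rfl]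
  rw [show α + k + 1 - γ = 1 - γ + (α + k) by ring, Real.rpow_add hL0]
  field_simp
  rw [Real.rpow_add hL0, Real.rpow_add hL0]
  ring
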